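/- Let A ∈ Σ be a nonzero 2×2 matrix, let m ≥ 1, and let J_m(A) be the 2m×2m complex matrix with m diagonal 2×2 blocks equal to A, identity blocks I₂ on the block superdiagonal, and zero blocks elsewhere. Let C = (C₁, …, C_m) be a 2×2m matrix with blocks C₁, …, C_m ∈ Σ. If C₁ ≠ 0, then ⋂_{n=0}^{m−1} Ker(C · J_m(A)ⁿ) = {0}, i.e. the pair (C, J_m(A)) is observable. -/

import Mathlib

open Matrix Complex

noncomputable def sigma2 : Matrix (Fin 2) (Fin 2) ℂ := !![0, -Complex.I; Complex.I, 0]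

/-- Membership in Σ. -/
def memSigma (S : Matrix (Fin 2) (Fin 2) ℂ) : Prop :=
  S.map (starRingEnd ℂ) = sigma2 * S * sigma2

/-- The block Jordan matrix J_m(A): diagonal 2×2 blocks equal to A, identity
blocks on the block superdiagonal, zero elsewhere. -/
def jordanBlockSigma (m : ℕ) (A : Matrix (Fin 2) (Fin 2) ℂ) :
    Matrix (Fin m × Fin 2) (Fin m × Fin 2) ℂ :=
  fun jk kl =>
    if jk.1 = kl.1 then A jk.2 kl.2
    else if (kl.1 : ℕ) = (jk.1 : ℕ) + 1 then (1 : Matrix (Fin 2) (Fin 2) ℂ) jk.2 kl.2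
    else 0

/-! ### Auxiliary lemmas about Σ -/

lemma sigma2_mul_sigma2 : sigma2 * sigma2 = 1 := by
  ext i j
  fin_cases i <;> fin_cases j <;>
    simp [sigma2, Matrix.mul_apply, Fin.sum_univ_two]

lemma memSigma_zero : memSigma 0 := by
  simp [memSigma]

lemma map_conj_add (S T : Matrix (Fin 2) (Fin 2) ℂ) :
    (S + T).map (starRingEnd ℂ) = S.map (starRingEnd ℂ) + T.map (starRingEnd ℂ) := by
  ext i j; simp

lemma map_conj_neg (S : Matrix (Fin 2) (Fin 2) ℂ) :
    (-S).map (starRingEnd ℂ) = -(S.map (starRingEnd ℂ)) := by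
  ext i j; simp

lemma memSigma_add {S T : Matrix (Fin 2) (Fin 2) ℂ} (hS : memSigma S) (hT : memSigma T) :
    memSigma (S + T) := by
  unfold memSigma at *
  rw [map_conj_add, hS, hT]
  noncomm_ring

lemma memSigma_neg {S : Matrix (Fin 2) (Fin 2) ℂ} (hS : memSigma S) : memSigma (-S) := by
  unfold memSigma at *
  rw [map_conj_neg, hS]
  noncomm_ring

lemma memSigma_sub {S T : Matrix (Fin 2) (Fin 2) ℂ} (hS : memSigma S) (hT : memSigma T) :
    memSigma (S - T) := by
  rw [sub_eq_add_neg]; exact memSigma_add hS (memSigma_neg hT)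

lemma memSigma_mul {S T : Matrix (Fin 2) (Fin 2) ℂ} (hS : memSigma S) (hT : memSigma T) :
    memSigma (S * T) := by
  unfold memSigma at *
  rw [Matrix.map_mul, hS, hT]
  rw [show sigma2 * S * sigma2 * (sigma2 * T * sigma2)
      = sigma2 * S * (sigma2 * sigma2) * T * sigma2 by noncomm_ring]
  rw [sigma2_mul_sigma2, Matrix.mul_one]
  noncomm_ring

lemma memSigma_sum {ι : Type*} (s : Finset ι) (f : ι → Matrix (Fin 2) (Fin 2) ℂ)
    (h : ∀ i ∈ s, memSigma (f i)) : memSigma (∑ i ∈ s, f i) := by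
  classical
  induction s using Finset.induction_on with
  | empty => simpa using memSigma_zero
  | insert _ _ hx ih =>
    rw [Finset.sum_insert hx]
    exact memSigma_add (h _ (Finset.mem_insert_self _ _))
      (ih fun i hi => h i (Finset.mem_insert_of_mem hi))

lemma memSigma_entries {S : Matrix (Fin 2) (Fin 2) ℂ} (h : memSigma S) :
    S 0 1 = -(starRingEnd ℂ) (S 1 0) ∧ S 1 1 = (starRingEnd ℂ) (S 0 0) := by
  unfold memSigma at h
  have h01 := congrFun (congrFun h 0) 1
  have h11 := congrFun (congrFun h 1) 1
  simp only [Matrix.map_apply, Matrix.mul_apply, Fin.sum_univ_two, sigma2,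
    Matrix.cons_val', Matrix.cons_val_zero, Matrix.cons_val_one, Matrix.head_cons,
    Matrix.empty_val', Matrix.cons_val_fin_one, Matrix.of_apply, Matrix.head_fin_const] at h01 h11
  have e1 : (starRingEnd ℂ) (S 0 1) = -S 1 0 := by
    rw [h01]; ring_nf; rw [Complex.I_sq]; ring
  have e2 : (starRingEnd ℂ) (S 1 1) = S 0 0 := by
    rw [h11]; ring_nf; rw [Complex.I_sq]; ring
  constructor
  · have := congrArg (starRingEnd ℂ) e1; simpa using this
  · have := congrArg (starRingEnd ℂ) e2; simpa using this

lemma memSigma_eq_zero_of_col {S : Matrix (Fin 2) (Fin 2) ℂ} (h : memSigma S)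
    (h0 : S 0 0 = 0) (h1 : S 1 0 = 0) : S = 0 := by
  obtain ⟨e1, e2⟩ := memSigma_entries h
  ext i j
  fin_cases i <;> fin_cases j <;> simp [h0, h1, e1, e2]

lemma memSigma_det_isUnit {S : Matrix (Fin 2) (Fin 2) ℂ} (h : memSigma S) (h0 : S ≠ 0) :
    IsUnit S.det := by
  obtain ⟨e1, e2⟩ := memSigma_entries h
  rw [Matrix.det_fin_two, e1, e2]
  rw [isUnit_iff_ne_zero]
  intro hdet
  apply h0
  have hz : S 0 0 * (starRingEnd ℂ) (S 0 0) + S 1 0 * (starRingEnd ℂ) (S 1 0) = 0 := by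
    linear_combination hdet
  rw [Complex.mul_conj, Complex.mul_conj] at hz
  norm_cast at hz
  have hn := Complex.normSq_nonneg (S 0 0)
  have hn' := Complex.normSq_nonneg (S 1 0)
  have z0 : Complex.normSq (S 0 0) = 0 := by linarith
  have z1 : Complex.normSq (S 1 0) = 0 := by linarith
  exact memSigma_eq_zero_of_col h (Complex.normSq_eq_zero.mp z0) (Complex.normSq_eq_zero.mp z1)

lemma memSigma_inv {S : Matrix (Fin 2) (Fin 2) ℂ} (h : memSigma S) (h0 : S ≠ 0) :
    memSigma S⁻¹ := by
  have hdet := memSigma_det_isUnit h h0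
  have hinv : S⁻¹ * S = 1 := Matrix.nonsing_inv_mul S hdet
  have h1 : (S⁻¹).map (starRingEnd ℂ) = (S.map (starRingEnd ℂ))⁻¹ := by
    symm
    apply Matrix.inv_eq_left_inv
    rw [← Matrix.map_mul, hinv]
    exact Matrix.map_one _ (map_zero _) (map_one _)
  have h2 : (sigma2 * S * sigma2)⁻¹ = sigma2 * S⁻¹ * sigma2 := by
    apply Matrix.inv_eq_left_inv
    rw [show sigma2 * S⁻¹ * sigma2 * (sigma2 * S * sigma2)
        = sigma2 * (S⁻¹ * (sigma2 * sigma2) * S) * sigma2 by noncomm_ring]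
    rw [sigma2_mul_sigma2, Matrix.mul_one, hinv, Matrix.mul_one, sigma2_mul_sigma2]
  unfold memSigma at h ⊢
  rw [h1, h, h2]

lemma one_add_comm_ne_zero (x A : Matrix (Fin 2) (Fin 2) ℂ) :
    (1 : Matrix (Fin 2) (Fin 2) ℂ) + (x * A - A * x) ≠ 0 := by
  intro h
  have ht := congrArg Matrix.trace h
  rw [Matrix.trace_add, Matrix.trace_sub, Matrix.trace_mul_comm] at ht
  simp [Matrix.trace_one] at ht

/-! ### The core elimination lemma over Σ -/

lemma sigma_core (A : Matrix (Fin 2) (Fin 2) ℂ) (hA : memSigma A) :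
    ∀ m : ℕ, ∀ O : ℕ → ℕ → Matrix (Fin 2) (Fin 2) ℂ, ∀ V : ℕ → Matrix (Fin 2) (Fin 2) ℂ,
    (∀ n s, s < m → memSigma (O n s)) →
    (∀ n, 0 < m → O (n+1) 0 = O n 0 * A) →
    (∀ n s, s + 1 < m → O (n+1) (s+1) = O n (s+1) * A + O n s) →
    (0 < m → O 0 0 ≠ 0) →
    (∀ s, s < m → memSigma (V s)) →
    (∀ n, n < m → ∑ s ∈ Finset.range m, O n s * V s = 0) →
    ∀ s, s < m → V s = 0 := by
  intro m
  induction m with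
  | zero => intro O V _ _ _ _ _ _ s hs; omega
  | succ m ih =>
    intro O V hOσ hrec0 hrec hO00 hVσ hEq
    have hm0 : (0:ℕ) < m + 1 := Nat.succ_pos m
    have hcσ : memSigma (O 0 0) := hOσ 0 0 hm0
    have hc0 : O 0 0 ≠ 0 := hO00 hm0
    have hdet := memSigma_det_isUnit hcσ hc0
    have hci : (O 0 0)⁻¹ * O 0 0 = 1 := Matrix.nonsing_inv_mul _ hdet
    have hcc : O 0 0 * (O 0 0)⁻¹ = 1 := Matrix.mul_nonsing_inv _ hdet
    set c := O 0 0 with hcdef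
    set B := c * A * c⁻¹ with hBdef
    have hBσ : memSigma B := memSigma_mul (memSigma_mul hcσ hA) (memSigma_inv hcσ hc0)
    have hpow : ∀ n, O n 0 = c * A ^ n := by
      intro n
      induction n with
      | zero => simp [hcdef]
      | succ n ihn => rw [hrec0 n hm0, ihn, pow_succ, mul_assoc]
    have hOt0 : ∀ n, O (n+1) 0 - B * O n 0 = 0 := by
      intro n
      rw [hpow, hpow, hBdef]
      rw [show c * A * c⁻¹ * (c * A ^ n) = c * A * (c⁻¹ * c) * A ^ n by noncomm_ring, hci]
      rw [pow_succ']
      noncomm_ring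
    have hV' : ∀ s, s < m → V (s+1) = 0 := by
      apply ih (fun n s => O (n+1) (s+1) - B * O n (s+1)) (fun s => V (s+1))
      · intro n s hs
        exact memSigma_sub (hOσ (n+1) (s+1) (by omega))
          (memSigma_mul hBσ (hOσ n (s+1) (by omega)))
      · intro n hm
        have h1m : (0:ℕ) + 1 < m + 1 := by omega
        have hz : O (n+1) 0 = B * O n 0 := by
          have := hOt0 n; rwa [sub_eq_zero] at this
        show O (n+2) 1 - B * O (n+1) 1 = (O (n+1) 1 - B * O n 1) * A
        rw [hrec (n+1) 0 h1m, hrec n 0 h1m, hz]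
        noncomm_ring
      · intro n s hs
        show O (n+2) (s+2) - B * O (n+1) (s+2)
          = (O (n+1) (s+2) - B * O n (s+2)) * A + (O (n+1) (s+1) - B * O n (s+1))
        rw [hrec (n+1) (s+1) (by omega), hrec n (s+1) (by omega)]
        noncomm_ring
      · intro hm
        have h1m : (0:ℕ) + 1 < m + 1 := by omega
        have hx1 : c * (c⁻¹ * O 0 1) = O 0 1 := by rw [← mul_assoc, hcc, one_mul]
        have key : O 1 1 - B * O 0 1
            = c * (1 + ((c⁻¹ * O 0 1) * A - A * (c⁻¹ * O 0 1))) := by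
          have expand : c * (1 + ((c⁻¹ * O 0 1) * A - A * (c⁻¹ * O 0 1)))
              = c + c * (c⁻¹ * O 0 1) * A - c * A * (c⁻¹ * O 0 1) := by noncomm_ring
          rw [expand, hx1, hrec 0 0 h1m, hBdef, mul_assoc (c * A) c⁻¹ (O 0 1)]
          noncomm_ring
        intro hzero
        have hw : c * (1 + ((c⁻¹ * O 0 1) * A - A * (c⁻¹ * O 0 1))) = 0 := by
          rw [← key]; exact hzero
        have h2 : (1 : Matrix (Fin 2) (Fin 2) ℂ) + ((c⁻¹ * O 0 1) * A - A * (c⁻¹ * O 0 1)) = 0 := by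
          have := congrArg (fun M => c⁻¹ * M) hw
          simpa [← mul_assoc, hci] using this
        exact one_add_comm_ne_zero _ _ h2
      · intro s hs; exact hVσ (s+1) (by omega)
      · intro n hn
        have hE1 := hEq (n+1) (by omega)
        have hE0 := hEq n (by omega)
        have hE : ∑ s ∈ Finset.range (m+1), (O (n+1) s - B * O n s) * V s = 0 := by
          have hterm : ∀ s, (O (n+1) s - B * O n s) * V s
              = O (n+1) s * V s - B * (O n s * V s) := by
            intro s; rw [sub_mul, mul_assoc]
          rw [Finset.sum_congr rfl fun s _ => hterm s, Finset.sum_sub_distrib,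
            ← Finset.mul_sum, hE1, hE0, mul_zero, sub_zero]
        rw [Finset.sum_range_succ'] at hE
        rw [hOt0 n, zero_mul, add_zero] at hE
        exact hE
    have hV0 : V 0 = 0 := by
      have hE0 := hEq 0 hm0
      rw [Finset.sum_range_succ'] at hE0
      have hz : ∑ s ∈ Finset.range m, O 0 (s+1) * V (s+1) = 0 :=
        Finset.sum_eq_zero fun s hs => by
          rw [hV' s (Finset.mem_range.mp hs), mul_zero]
      rw [hz, zero_add] at hE0
      have := congrArg (fun M => c⁻¹ * M) hE0
      simpa [← mul_assoc, ← hcdef, hci] using this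
    intro s hs
    match s with
    | 0 => exact hV0
    | (s+1) => exact hV' s (by omega)

/-! ### Jordan block column computations -/

lemma jordan_col_zero (m : ℕ) (A : Matrix (Fin 2) (Fin 2) ℂ)
    (M : Matrix (Fin 2) (Fin m × Fin 2) ℂ) (h0 : 0 < m) (a b : Fin 2) :
    (M * jordanBlockSigma m A) a ((⟨0, h0⟩ : Fin m), b)
      = ∑ l, M a (⟨0, h0⟩, l) * A l b := by
  rw [Matrix.mul_apply, Fintype.sum_prod_type]
  rw [Finset.sum_eq_single (⟨0, h0⟩ : Fin m)]
  · exact Finset.sum_congr rfl fun l _ => by simp [jordanBlockSigma]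
  · intro k _ hk
    apply Finset.sum_eq_zero; intro l _
    have h1 : ¬(k = (⟨0, h0⟩ : Fin m)) := hk
    have h2 : ¬((((⟨0, h0⟩ : Fin m) : Fin m) : ℕ) = (k : ℕ) + 1) := by simp
    simp [jordanBlockSigma, h1, h2]
  · intro h; exact absurd (Finset.mem_univ _) h

lemma jordan_col_succ (m : ℕ) (A : Matrix (Fin 2) (Fin 2) ℂ)
    (M : Matrix (Fin 2) (Fin m × Fin 2) ℂ) (s : ℕ) (hs : s + 1 < m) (a b : Fin 2) :
    (M * jordanBlockSigma m A) a ((⟨s + 1, hs⟩ : Fin m), b)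
      = (∑ l, M a (⟨s + 1, hs⟩, l) * A l b) + M a (⟨s, by omega⟩, b) := by
  have hsm : s < m := by omega
  rw [Matrix.mul_apply, Fintype.sum_prod_type]
  have hsplit : ∀ k : Fin m,
      (∑ l, M a (k, l) * jordanBlockSigma m A (k, l) (⟨s + 1, hs⟩, b))
      = (if k = ⟨s + 1, hs⟩ then ∑ l, M a (k, l) * A l b else 0)
        + (if k = ⟨s, hsm⟩ then M a (k, b) else 0) := by
    intro k
    by_cases h1 : k = (⟨s + 1, hs⟩ : Fin m)
    · subst h1
      have h3 : (⟨s + 1, hs⟩ : Fin m) ≠ (⟨s, hsm⟩ : Fin m) := by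
        simp [Fin.ext_iff]
      simp [jordanBlockSigma, h3]
    · by_cases h2 : k = (⟨s, hsm⟩ : Fin m)
      · subst h2
        have h3 : ((⟨s + 1, hs⟩ : Fin m) : ℕ) = ((⟨s, hsm⟩ : Fin m) : ℕ) + 1 := rfl
        simp only [jordanBlockSigma]
        rw [if_neg h1]
        simp [Matrix.one_apply, mul_ite, mul_one, mul_zero, h1]
      · have h3 : ¬(((⟨s + 1, hs⟩ : Fin m) : ℕ) = (k : ℕ) + 1) := by
          intro h; apply h2; apply Fin.ext; simp at h ⊢; omega
        have h1' : ¬((k : Fin m) = (⟨s+1, hs⟩ : Fin m)) := h1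
        simp [jordanBlockSigma, h1', h2, h3, show ¬ (s = (k:ℕ)) from fun h => h2 (Fin.ext h.symm)]
  rw [Finset.sum_congr rfl fun k _ => hsplit k, Finset.sum_add_distrib]
  rw [Finset.sum_ite_eq' Finset.univ (⟨s+1, hs⟩ : Fin m), Finset.sum_ite_eq' Finset.univ]
  simp

/-! ### Quaternionification of vectors -/

noncomputable def quatOf (w : Fin 2 → ℂ) : Matrix (Fin 2) (Fin 2) ℂ :=
  !![w 0, -(starRingEnd ℂ) (w 1); w 1, (starRingEnd ℂ) (w 0)]

lemma memSigma_quatOf (w : Fin 2 → ℂ) : memSigma (quatOf w) := by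
  unfold memSigma quatOf
  ext i j
  fin_cases i <;> fin_cases j <;>
    simp [sigma2, Matrix.mul_apply, Fin.sum_univ_two, Matrix.map_apply] <;>
    ring_nf <;> rw [Complex.I_sq] <;> ring

lemma quatOf_col0 (w : Fin 2 → ℂ) (b : Fin 2) : quatOf w b 0 = w b := by
  fin_cases b <;> simp [quatOf]

/-! ### Main theorem -/

/-- if A ∈ Σ is nonzero and C = (C₁,…,C_m) has blocks in Σ with
C₁ ≠ 0, then ⋂_{n=0}^{m−1} Ker (C · J_m(A)ⁿ) = {0}: the pair (C, J_m(A)) is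
observable. -/
theorem observable_of_first_block_nonzero (m : ℕ) (hm : 1 ≤ m)
    (A : Matrix (Fin 2) (Fin 2) ℂ) (hA : memSigma A) (hA0 : A ≠ 0)
    (C : Matrix (Fin 2) (Fin m × Fin 2) ℂ)
    (hC : ∀ j : Fin m, memSigma (fun a b => C a (j, b)))
    (hC1 : (fun a b => C a ((⟨0, hm⟩ : Fin m), b)) ≠ (0 : Matrix (Fin 2) (Fin 2) ℂ)) :
    ∀ v : Fin m × Fin 2 → ℂ,
      (∀ n < m, (C * jordanBlockSigma m A ^ n).mulVec v = 0) → v = 0 := by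
  intro v hv
  have hm0 : 0 < m := hm
  set J := jordanBlockSigma m A with hJ
  set R : ℕ → ℕ → Matrix (Fin 2) (Fin 2) ℂ :=
    fun n s => if h : s < m then Matrix.of (fun a b => (C * J ^ n) a (⟨s, h⟩, b)) else 0 with hR
  set V : ℕ → Matrix (Fin 2) (Fin 2) ℂ :=
    fun s => if h : s < m then quatOf (fun b => v (⟨s, h⟩, b)) else 0 with hV
  -- basic unfoldings
  have hRval : ∀ n s (h : s < m) (a b : Fin 2), R n s a b = (C * J ^ n) a (⟨s, h⟩, b) := by
    intro n s h a b; rw [hR]; simp only [dif_pos h]; rfl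
  have hVval : ∀ s (h : s < m) (b : Fin 2), V s b 0 = v (⟨s, h⟩, b) := by
    intro s h b; rw [hV]; simp only [dif_pos h]; exact quatOf_col0 _ b
  -- recursions
  have hCJ : ∀ n : ℕ, C * J ^ (n+1) = (C * J ^ n) * J := by
    intro n; rw [pow_succ, ← Matrix.mul_assoc]
  have hRrec0 : ∀ n, 0 < m → R (n+1) 0 = R n 0 * A := by
    intro n h
    ext a b
    have hA1 : (R n 0 * A) a b = ∑ l, (C * J ^ n) a (⟨0, h⟩, l) * A l b := by
      rw [Matrix.mul_apply]
      exact Finset.sum_congr rfl fun l _ => by rw [hRval n 0 h a l]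
    rw [hRval (n+1) 0 h a b, hCJ n, hJ, jordan_col_zero m A (C * J ^ n) h a b, hA1]
  have hRrec : ∀ n s, s + 1 < m → R (n+1) (s+1) = R n (s+1) * A + R n s := by
    intro n s hs
    ext a b
    have hA1 : (R n (s+1) * A) a b = ∑ l, (C * J ^ n) a (⟨s+1, hs⟩, l) * A l b := by
      rw [Matrix.mul_apply]
      exact Finset.sum_congr rfl fun l _ => by rw [hRval n (s+1) hs a l]
    rw [hRval (n+1) (s+1) hs a b, hCJ n, hJ, jordan_col_succ m A (C * J ^ n) s hs a b,
      Matrix.add_apply, hA1, hRval n s (by omega) a b]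
  -- base
  have hR0 : ∀ s (h : s < m), R 0 s = Matrix.of (fun a b => C a (⟨s, h⟩, b)) := by
    intro s h
    ext a b
    rw [hRval 0 s h a b, pow_zero, Matrix.mul_one]
    rfl
  -- memSigma of R
  have hRσ : ∀ n s, s < m → memSigma (R n s) := by
    intro n
    induction n with
    | zero =>
      intro s hs
      rw [hR0 s hs]
      exact hC ⟨s, hs⟩
    | succ n ihn =>
      intro s hs
      match s with
      | 0 => rw [hRrec0 n hs]; exact memSigma_mul (ihn 0 hs) hA
      | (s+1) =>
        rw [hRrec n s hs]
        exact memSigma_add (memSigma_mul (ihn (s+1) hs) hA) (ihn s (by omega))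
  have hVσ : ∀ s, s < m → memSigma (V s) := by
    intro s hs
    rw [hV]; simp only [dif_pos hs]
    exact memSigma_quatOf _
  have hR00 : 0 < m → R 0 0 ≠ 0 := by
    intro h hzero
    apply hC1
    rw [hR0 0 h] at hzero
    exact hzero
  -- the quaternion equations
  have hE : ∀ n, n < m → ∑ s ∈ Finset.range m, R n s * V s = 0 := by
    intro n hn
    have hWσ : memSigma (∑ s ∈ Finset.range m, R n s * V s) :=
      memSigma_sum _ _ fun s hs =>
        memSigma_mul (hRσ n s (Finset.mem_range.mp hs))
          (hVσ s (Finset.mem_range.mp hs))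
    have hcol : ∀ a : Fin 2, (∑ s ∈ Finset.range m, R n s * V s) a 0 = 0 := by
      intro a
      rw [Matrix.sum_apply]
      have step : ∀ k : Fin m, (R n (k : ℕ) * V (k : ℕ)) a 0
          = ∑ b, (C * J ^ n) a (k, b) * v (k, b) := by
        intro k
        rw [Matrix.mul_apply]
        apply Finset.sum_congr rfl
        intro b _
        rw [hRval n k k.isLt a b, hVval k k.isLt b]
      calc ∑ s ∈ Finset.range m, (R n s * V s) a 0
          = ∑ k : Fin m, (R n (k : ℕ) * V (k : ℕ)) a 0 :=
            (Fin.sum_univ_eq_sum_range (fun s => (R n s * V s) a 0) m).symm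
        _ = ∑ k : Fin m, ∑ b, (C * J ^ n) a (k, b) * v (k, b) :=
            Finset.sum_congr rfl fun k _ => step k
        _ = ∑ x : Fin m × Fin 2, (C * J ^ n) a x * v x :=
            (Fintype.sum_prod_type (f := fun x : Fin m × Fin 2 => (C * J ^ n) a x * v x)).symm
        _ = 0 := by simpa [Matrix.mulVec, dotProduct] using congrFun (hv n hn) a
    exact memSigma_eq_zero_of_col hWσ (hcol 0) (hcol 1)
  -- apply core lemma
  have hVz := sigma_core A hA m R V hRσ hRrec0 hRrec hR00 hVσ hE
  funext x
  obtain ⟨k, b⟩ := x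
  have hk := hVz (k : ℕ) k.isLt
  have := hVval (k : ℕ) k.isLt b
  rw [hk] at this
  simp only [Matrix.zero_apply] at this
  have hkb : ((⟨(k : ℕ), k.isLt⟩ : Fin m), b) = (k, b) := by simp
  rw [hkb] at this
  exact this.symm
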